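/- In spherical symmetry γ = f(r) with r = ‖x‖, if r₀ > 0 satisfies 1 + f(r₀)f′(r₀)r₀³/(1+2f(r₀)²r₀²) = 0 (equivalently 1 + 2f²r₀² + f f′ r₀³ = 0), then the equatorial circle x¹(t) = r₀ cos t, x²(t) = r₀ sin t, x³(t) = 0 is a solution of the anisotropic equations of motion. -/

import Mathlib

/-- in spherical symmetry `γ = f(r)`, if `r₀ > 0` satisfies
`1 + f(r₀)f′(r₀)r₀³/(1+2f(r₀)²r₀²) = 0`, then the equatorial circle
`x(t) = (r₀ cos t, r₀ sin t, 0)` solves the anisotropic equations of motion. -/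
theorem equatorial_circle_is_solution
    (f f' : ℝ → ℝ) (hf : ∀ r > (0:ℝ), HasDerivAt f (f' r) r)
    (hfpos : ∀ r > (0:ℝ), 0 < f r)
    (r₀ : ℝ) (hr₀ : 0 < r₀)
    (hcond : 1 + f r₀ * f' r₀ * r₀ ^ 3 / (1 + 2 * (f r₀) ^ 2 * r₀ ^ 2) = 0)
    (x : ℝ → Fin 3 → ℝ)
    (hx : ∀ t, x t = ![r₀ * Real.cos t, r₀ * Real.sin t, 0])
    (V : ℝ → Fin 3 → ℝ) (hV : ∀ t i, V t i = deriv (fun s => x s i) t)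
    (v : ℝ → ℝ) (hvel : ∀ t, (v t) ^ 2 = ∑ i, V t i ^ 2)
    (γgrad : ℝ → Fin 3 → ℝ)
    (hγgrad : ∀ t i, γgrad t i = f' r₀ * (x t i / r₀)) :
    ∀ t : ℝ, ∀ i, deriv (fun s => V s i) t
      + (4 * f r₀ * (v t) ^ 2 * (1 + 3 * (f r₀) ^ 2 * (v t) ^ 2)
          / ((1 + 2 * (f r₀) ^ 2 * (v t) ^ 2) * (1 + 6 * (f r₀) ^ 2 * (v t) ^ 2)))
          * (∑ s, γgrad t s * V t s) * V t i
      - (f r₀ * (v t) ^ 4 / (1 + 2 * (f r₀) ^ 2 * (v t) ^ 2)) * γgrad t i = 0 := by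
  have hfr := hfpos r₀ hr₀
  have hD : (0:ℝ) < 1 + 2 * (f r₀) ^ 2 * r₀ ^ 2 := by positivity
  have hcond' : f r₀ * f' r₀ * r₀ ^ 3 = -(1 + 2 * (f r₀) ^ 2 * r₀ ^ 2) := by
    field_simp at hcond; linarith
  have hV0 : ∀ s, V s 0 = -(r₀ * Real.sin s) := by
    intro s; rw [hV]
    have h1 : (fun u => x u 0) = fun u => r₀ * Real.cos u := by
      funext u; rw [hx]; simp
    rw [h1, ((Real.hasDerivAt_cos s).const_mul r₀).deriv]; ring
  have hV1 : ∀ s, V s 1 = r₀ * Real.cos s := by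
    intro s; rw [hV]
    have h1 : (fun u => x u 1) = fun u => r₀ * Real.sin u := by
      funext u; rw [hx]; simp
    rw [h1, ((Real.hasDerivAt_sin s).const_mul r₀).deriv]
  have hV2 : ∀ s, V s 2 = 0 := by
    intro s; rw [hV]
    have h1 : (fun u => x u 2) = fun _ => (0:ℝ) := by
      funext u; rw [hx]; simp
    rw [h1, deriv_const]
  intro t i
  have hv2 : v t ^ 2 = r₀ ^ 2 := by
    rw [hvel, Fin.sum_univ_three, hV0, hV1, hV2]
    nlinarith [Real.sin_sq_add_cos_sq t]
  have hsum : (∑ s, γgrad t s * V t s) = 0 := by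
    rw [Fin.sum_univ_three, hV0, hV1, hV2, hγgrad, hγgrad, hγgrad, hx]
    simp; ring
  have hdV0 : deriv (fun s => V s 0) t = -(r₀ * Real.cos t) := by
    have h1 : (fun s => V s 0) = fun s => -(r₀ * Real.sin s) := funext hV0
    rw [h1]; exact (((Real.hasDerivAt_sin t).const_mul r₀).neg).deriv
  have hdV1 : deriv (fun s => V s 1) t = -(r₀ * Real.sin t) := by
    have h1 : (fun s => V s 1) = fun s => r₀ * Real.cos s := funext hV1
    rw [h1, ((Real.hasDerivAt_cos t).const_mul r₀).deriv]; ring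
  have hdV2 : deriv (fun s => V s 2) t = 0 := by
    have h1 : (fun s => V s 2) = fun _ => (0:ℝ) := funext hV2
    rw [h1, deriv_const]
  have hv4 : v t ^ 4 = r₀ ^ 4 := by nlinarith [hv2]
  rw [hsum, hv2, hv4, hγgrad, hx]
  fin_cases i <;> simp only [Fin.zero_eta, Fin.mk_one, Fin.isValue, show ((⟨2, by omega⟩ : Fin 3)) = 2 from rfl]
  · rw [hdV0]; simp only [Matrix.cons_val_zero]
    field_simp
    linear_combination (-6 * r₀ ^ 3 * Real.cos t * f r₀ ^ 2 - r₀ * Real.cos t) * hcond'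
  · rw [hdV1]; simp only [Matrix.cons_val_one, Matrix.head_cons, Matrix.cons_val_zero]
    field_simp
    linear_combination (-6 * r₀ ^ 3 * Real.sin t * f r₀ ^ 2 - r₀ * Real.sin t) * hcond'
  · rw [hdV2]; simp
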